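/- arXiv:1006.5768 — 3 statements merged into one kernel-verified Lean document; each statement's English description precedes it below -/
import Mathlib

section
/- The comparison of bitstrings that first compares lengths, and for equal lengths compares lexicographically from the most significant end (i.e., the last differing bit decides, with 0 < 1), coincides with the natural order of their bijective base-2 decodings: cmp(x,y) = compare(d(x), d(y)). -/
/-- Bitstrings: finite lists over {0,1}; `false` = 0, `true` = 1,
least significant digit first. -/
abbrev BitString := List Bool

/-- Successor in bijective base-2. -/
def bsucc : BitString → BitString
  | [] => [false]
  | false :: xs => true :: xs
  | true :: xs => false :: bsucc xs

/-- Bijective base-2 decoding. -/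
def bdec : BitString → ℕ
  | [] => 0
  | false :: xs => 2 * bdec xs + 1
  | true :: xs => 2 * bdec xs + 2

/-- Comparison of same-length bitstrings: the result of comparing the tails
(more significant bits) takes precedence over the heads; 0 < 1. -/
def samelenCmp : BitString → BitString → Ordering
  | [], [] => .eq
  | [], _ :: _ => .lt
  | _ :: _, [] => .gt
  | false :: xs, false :: ys => samelenCmp xs ys
  | true :: xs, true :: ys => samelenCmp xs ys
  | false :: xs, true :: ys =>
      match samelenCmp xs ys with
      | .eq => .lt
      | o => o
  | true :: xs, false :: ys =>
      match samelenCmp xs ys with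
      | .eq => .gt
      | o => o

/-- Length-first comparison of bitstrings. -/
def bcmp (x y : BitString) : Ordering :=
  match compare x.length y.length with
  | .eq => samelenCmp x y
  | o => o

lemma bdec_le (xs : BitString) : bdec xs + 2 ≤ 2 ^ (xs.length + 1) := by
  induction xs with
  | nil => simp [bdec]
  | cons b xs ih =>
    cases b <;> simp only [bdec, List.length_cons, pow_succ] at * <;> omega

lemma le_bdec (xs : BitString) : 2 ^ xs.length ≤ bdec xs + 1 := by
  induction xs with
  | nil => simp [bdec]
  | cons b xs ih =>
    cases b <;> simp only [bdec, List.length_cons, pow_succ] at * <;> omega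

lemma samelen_eq (x y : BitString) (h : x.length = y.length) :
    samelenCmp x y = compare (bdec x) (bdec y) := by
  induction x generalizing y with
  | nil => cases y with
    | nil => simp [samelenCmp, bdec, Nat.compare_eq_eq.mpr rfl]
    | cons c ys => simp at h
  | cons b xs ih =>
    cases y with
    | nil => simp at h
    | cons c ys =>
      simp only [List.length_cons, Nat.add_right_cancel_iff] at h
      have := ih ys h
      cases b <;> cases c <;>
        simp only [samelenCmp, bdec, this] <;>
        rcases Nat.lt_trichotomy (bdec xs) (bdec ys) with hl | hl | hl <;>
        simp [Nat.compare_eq_lt.mpr, Nat.compare_eq_gt.mpr, Nat.compare_eq_eq.mpr, hl] <;>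
        first
          | (rw [Nat.compare_eq_lt.mpr (by omega), Nat.compare_eq_lt.mpr (by omega)])
          | (rw [Nat.compare_eq_gt.mpr (by omega), Nat.compare_eq_gt.mpr (by omega)])
          | (rw [Nat.compare_eq_lt.mpr (by omega)])
          | (rw [Nat.compare_eq_gt.mpr (by omega)])
          | (rw [Nat.compare_eq_eq.mpr (by omega)])

lemma bdec_lt_of_len_lt {x y : BitString} (h : x.length < y.length) :
    bdec x < bdec y := by
  have h1 := bdec_le x
  have h2 := le_bdec y
  have : (2:ℕ) ^ (x.length + 1) ≤ 2 ^ y.length := Nat.pow_le_pow_right (by norm_num) h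
  omega

/-- The length-then-lexicographic comparison coincides with the natural order
of the bijective base-2 decodings. -/
theorem bcmp_eq_compare_bdec (x y : BitString) :
    bcmp x y = compare (bdec x) (bdec y) := by
  unfold bcmp
  rcases Nat.lt_trichotomy x.length y.length with h | h | h
  · rw [Nat.compare_eq_lt.mpr h, Nat.compare_eq_lt.mpr (bdec_lt_of_len_lt h)]
  · rw [Nat.compare_eq_eq.mpr h]
    exact samelen_eq x y h
  · rw [Nat.compare_eq_gt.mpr h, Nat.compare_eq_gt.mpr (bdec_lt_of_len_lt h)]
end

section
/- The Ackermann encoding f from hereditarily finite sets to natural numbers, defined by f(x) = sum over a ∈ x of 2^(f(a)), is a bijection between hereditarily finite sets and the natural numbers. -/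
/-- Hereditarily finite sets, represented as finite trees: a set is given by a
(list of) its elements; equality of sets is the extensional equivalence `HF.Equiv`. -/
inductive HF : Type
  | mk : List HF → HF

namespace HF

/-- The list of elements of a hereditarily finite set. -/
def elems : HF → List HF
  | .mk xs => xs

/-- The Ackermann encoding: `ack x = Σ_{a ∈ x} 2 ^ (ack a)` (the sum ranges
over the distinct elements of `x`, i.e. over the distinct codes). -/
def ack : HF → ℕ
  | .mk xs => (((xs.attach.map fun a => ack a.1).dedup).map fun k => 2 ^ k).sum
decreasing_by
  have := List.sizeOf_lt_of_mem a.2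
  simp only [HF.mk.sizeOf_spec]
  omega

/-- Extensional equality of hereditarily finite sets: each element of one side
is (extensionally) an element of the other. -/
def Equiv : HF → HF → Prop
  | .mk xs, .mk ys =>
      (∀ a ∈ xs, ∃ b ∈ ys, Equiv a b) ∧ (∀ b ∈ ys, ∃ a ∈ xs.attach, Equiv a.1 b)
termination_by x _ => sizeOf x
decreasing_by
  · have := List.sizeOf_lt_of_mem ‹a ∈ xs›; simp only [HF.mk.sizeOf_spec]; omega
  · have := List.sizeOf_lt_of_mem a.2; simp only [HF.mk.sizeOf_spec]; omega

/-- Set membership (up to extensional equality). -/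
def Mem (a : HF) : HF → Prop
  | .mk xs => ∃ b ∈ xs, Equiv a b

/-- Set inclusion. -/
def Subset (x y : HF) : Prop := ∀ a, Mem a x → Mem a y

end HF


lemma HF.ack_mk (xs : List HF) :
    HF.ack (.mk xs) = ∑ k ∈ (xs.map HF.ack).toFinset, 2 ^ k := by
  rw [HF.ack]
  have h1 : xs.attach.map (fun a => HF.ack a.1) = xs.map HF.ack := by
    simp [List.attach_map_val]
  have h2 : (xs.map HF.ack).dedup.toFinset = (xs.map HF.ack).toFinset := by
    ext k; simp
  rw [h1, ← h2, List.sum_toFinset _ (List.nodup_dedup _)]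

lemma HF.ack_key : ∀ n x y, sizeOf x + sizeOf y ≤ n →
    (HF.Equiv x y ↔ HF.ack x = HF.ack y) := by
  intro n
  induction n with
  | zero => rintro ⟨xs⟩ ⟨ys⟩ h; simp at h
  | succ n ih =>
    rintro ⟨xs⟩ ⟨ys⟩ h
    have hx : ∀ a ∈ xs, sizeOf a < sizeOf (HF.mk xs) := by
      intro a ha; have := List.sizeOf_lt_of_mem ha; simp; omega
    have hy : ∀ b ∈ ys, sizeOf b < sizeOf (HF.mk ys) := by
      intro b hb; have := List.sizeOf_lt_of_mem hb; simp; omega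
    have IH : ∀ a ∈ xs, ∀ b ∈ ys, (HF.Equiv a b ↔ HF.ack a = HF.ack b) := by
      intro a ha b hb
      exact ih a b (by have := hx a ha; have := hy b hb; omega)
    rw [HF.Equiv, HF.ack_mk, HF.ack_mk,
      (Finset.geomSum_injective (n := 2) le_rfl).eq_iff]
    constructor
    · rintro ⟨h1, h2⟩
      ext k
      simp only [List.mem_toFinset, List.mem_map]
      constructor
      · rintro ⟨a, ha, rfl⟩
        obtain ⟨b, hb, hab⟩ := h1 a ha
        exact ⟨b, hb, ((IH a ha b hb).1 hab).symm⟩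
      · rintro ⟨b, hb, rfl⟩
        obtain ⟨a, ha, hab⟩ := h2 b hb
        exact ⟨a.1, a.2, (IH a.1 a.2 b hb).1 hab⟩
    · intro hst
      constructor
      · intro a ha
        have : HF.ack a ∈ (ys.map HF.ack).toFinset := by
          rw [← hst]; simp only [List.mem_toFinset, List.mem_map]; exact ⟨a, ha, rfl⟩
        simp only [List.mem_toFinset, List.mem_map] at this
        obtain ⟨b, hb, hab⟩ := this
        exact ⟨b, hb, (IH a ha b hb).2 hab.symm⟩
      · intro b hb
        have : HF.ack b ∈ (xs.map HF.ack).toFinset := by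
          rw [hst]; simp only [List.mem_toFinset, List.mem_map]; exact ⟨b, hb, rfl⟩
        simp only [List.mem_toFinset, List.mem_map] at this
        obtain ⟨a, ha, hab⟩ := this
        exact ⟨⟨a, ha⟩, List.mem_attach _ _, (IH a ha b hb).2 hab⟩

/-- The Ackermann encoding is a bijection between hereditarily finite sets
(taken up to extensional equality) and the natural numbers. -/
theorem ack_bijective :
    (∀ x y : HF, HF.Equiv x y ↔ HF.ack x = HF.ack y) ∧
    Function.Surjective HF.ack := by
  constructor
  · intro x y; exact HF.ack_key _ x y le_rfl
  · intro n
    induction n using Nat.strong_induction_on with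
    | _ n ih =>
      have hlt : ∀ i ∈ n.bitIndices, i < n := by
        intro i hi
        have h2 := Nat.two_pow_le_of_mem_bitIndices hi
        have : i < 2 ^ i := Nat.lt_two_pow_self
        omega
      choose g hg using fun (i : {i // i ∈ n.bitIndices}) => ih i.1 (hlt i.1 i.2)
      refine ⟨HF.mk (n.bitIndices.attach.map g), ?_⟩
      rw [HF.ack_mk]
      have : (n.bitIndices.attach.map g).map HF.ack = n.bitIndices := by
        rw [List.map_map]
        have : HF.ack ∘ g = fun i => i.1 := funext fun i => hg i
        rw [this]
        simp
      rw [this, List.sum_toFinset _ Nat.bitIndices_sorted.nodup]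
      exact Nat.twoPowSum_bitIndices n
end

section
/- Under the Ackermann encoding f of hereditarily finite sets, the powerset operation satisfies f(powerset(x)) = Σ over subsets y ⊆ x of 2^(f(y)), and furthermore f(powerset(x)) = P(f(x)) where P(0)=1 and P(n+1) = P(n) XOR 2·P(n). -/
/-- The powerset: the set of all subsets (all sublists of the element list). -/
def HF.powerset (x : HF) : HF := .mk (x.elems.sublists.map HF.mk)

/-- `P 0 = 1`, `P (n+1) = P n XOR (2 * P n)`. -/
def P : ℕ → ℕ
  | 0 => 1
  | n + 1 => P n ^^^ (2 * P n)


namespace HFAux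

lemma sum_range_pow2 (n : ℕ) : ∑ i ∈ Finset.range n, 2 ^ i = 2 ^ n - 1 := by
  induction n with
  | zero => simp
  | succ n ih => rw [Finset.sum_range_succ, ih]; have := Nat.one_le_two_pow (n := n); omega

lemma testBit_sum_two_pow (s : Finset ℕ) (k : ℕ) :
    (∑ i ∈ s, 2 ^ i).testBit k = (decide (k ∈ s)) := by
  induction s using Finset.strongInduction with
  | _ s ih =>
    rcases s.eq_empty_or_nonempty with rfl | hs
    · simp
    · set M := s.max' hs with hM
      have hMs : M ∈ s := s.max'_mem hs
      have hsplit : ∑ i ∈ s, 2 ^ i = 2 ^ M + ∑ i ∈ s.erase M, 2 ^ i := by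
        rw [Finset.add_sum_erase _ _ hMs]
      have hlt : ∑ i ∈ s.erase M, 2 ^ i < 2 ^ M := by
        have hsub : s.erase M ⊆ Finset.range M := by
          intro i hi
          rw [Finset.mem_range]
          rcases Finset.mem_erase.mp hi with ⟨hne, his⟩
          exact lt_of_le_of_ne (s.le_max' i his) hne
        calc ∑ i ∈ s.erase M, 2 ^ i ≤ ∑ i ∈ Finset.range M, 2 ^ i :=
              Finset.sum_le_sum_of_subset hsub
          _ = 2 ^ M - 1 := sum_range_pow2 M
          _ < 2 ^ M := by have := Nat.one_le_two_pow (n := M); omega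
      have ihs := ih (s.erase M) (Finset.erase_ssubset hMs)
      rw [hsplit]
      rcases lt_trichotomy k M with h | rfl | h
      · rw [Nat.testBit_two_pow_add_gt h, ihs]
        simp [Finset.mem_erase, Nat.ne_of_lt h]
      · rw [Nat.testBit_two_pow_add_eq, Nat.testBit_lt_two_pow hlt]
        simp [hMs]
      · have : 2 ^ M + ∑ i ∈ s.erase M, 2 ^ i < 2 ^ k := by
          have h1 : 2 ^ (M + 1) ≤ 2 ^ k := Nat.pow_le_pow_right (by norm_num) h
          have : 2 ^ (M + 1) = 2 ^ M + 2 ^ M := by ring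
          omega
        rw [Nat.testBit_lt_two_pow this]
        have : k ∉ s := fun hk => absurd (s.le_max' k hk) (by omega)
        simp [this]

lemma odd_choose_iff : ∀ n k : ℕ, Odd (n.choose k) ↔ k &&& n = k := by
  intro n
  induction n using Nat.strong_induction_on with
  | _ n ih =>
    intro k
    rcases Nat.eq_zero_or_pos n with rfl | hn
    · rcases Nat.eq_zero_or_pos k with rfl | hk
      · simp
      · simp [Nat.choose_eq_zero_of_lt hk, Nat.odd_iff]
        omega
    · have : Fact (Nat.Prime 2) := ⟨Nat.prime_two⟩
      have hl := Choose.choose_modEq_choose_mod_mul_choose_div (n := n) (k := k) (p := 2)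
      have hmod : n.choose k % 2 = ((n % 2).choose (k % 2) * ((n / 2).choose (k / 2))) % 2 := by
        rw [Int.ModEq] at hl; exact_mod_cast hl
      have hodd : Odd (n.choose k) ↔
          (Odd ((n % 2).choose (k % 2)) ∧ Odd ((n / 2).choose (k / 2))) := by
        rw [Nat.odd_iff, hmod, ← Nat.odd_iff, Nat.odd_mul]
      have ih2 := ih (n / 2) (by omega) (k / 2)
      have hdigit : Odd ((n % 2).choose (k % 2)) ↔ ¬(n % 2 = 0 ∧ k % 2 = 1) := by
        rcases Nat.mod_two_eq_zero_or_one n with h1 | h1 <;>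
          rcases Nat.mod_two_eq_zero_or_one k with h2 | h2 <;>
            simp [h1, h2, Nat.choose]
      have h1 : (k &&& n) / 2 = k / 2 &&& n / 2 := Nat.and_div_two
      have h2 : (k &&& n) % 2 = 1 ↔ (k % 2 = 1 ∧ n % 2 = 1) := Nat.and_mod_two_eq_one
      rw [hodd, hdigit, ih2]
      constructor
      · rintro ⟨hd, he⟩
        have hm : (k &&& n) % 2 = k % 2 := by
          rcases Nat.mod_two_eq_zero_or_one k with h3 | h3 <;>
            rcases Nat.mod_two_eq_zero_or_one n with h4 | h4 <;> omega
        have hdiv : (k &&& n) / 2 = k / 2 := by rw [h1, he]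
        omega
      · intro he
        constructor
        · rintro ⟨h3, h4⟩
          have : (k &&& n) % 2 = k % 2 := by rw [he]
          omega
        · rw [← h1, he]

lemma testBit_P_choose (n : ℕ) : ∀ k, (P n).testBit k = decide (Odd (n.choose k)) := by
  induction n with
  | zero =>
    intro k
    rcases Nat.eq_zero_or_pos k with rfl | hk
    · simp [P]
    · have h1 : (P 0).testBit k = false := by
        show Nat.testBit 1 k = false
        have : (1 : ℕ) = 2 ^ 0 := rfl
        rw [this, Nat.testBit_two_pow_of_ne (by omega)]
      rw [h1, Nat.choose_eq_zero_of_lt hk]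
      simp [Nat.odd_iff]
  | succ n ih =>
    intro k
    have hP : P (n + 1) = P n ^^^ (2 * P n) := rfl
    rw [hP, Nat.testBit_xor]
    rcases Nat.eq_zero_or_pos k with rfl | hk
    · have h2 : (2 * P n).testBit 0 = false := by
        simp [Nat.testBit_zero, Nat.mul_mod_right]
      rw [h2, ih 0, Nat.choose_zero_right, Nat.choose_zero_right]
      simp
    · obtain ⟨j, rfl⟩ := Nat.exists_eq_add_of_lt hk
      rw [zero_add] at *
      have h2 : (2 * P n).testBit (j + 1) = (P n).testBit j := by
        rw [Nat.testBit_add_one]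
        congr 1
        omega
      rw [h2, ih (j + 1), ih j, Nat.choose_succ_succ]
      have hoa : Odd (n.choose j + n.choose (j + 1)) ↔
          (Odd (n.choose j) ↔ ¬ Odd (n.choose (j + 1))) := by
        rw [Nat.odd_add, Nat.not_odd_iff_even]
      by_cases h3 : Odd (n.choose (j + 1)) <;> by_cases h4 : Odd (n.choose j) <;>
        simp [h3, h4, hoa]

lemma testBit_P (n k : ℕ) : (P n).testBit k = decide (k &&& n = k) := by
  rw [testBit_P_choose, decide_eq_decide]
  exact odd_choose_iff n k

lemma ack_mk (xs : List HF) :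
    HF.ack (.mk xs) = ((xs.map HF.ack).dedup.map fun k => 2 ^ k).sum := by
  rw [HF.ack]; congr 1; rw [List.attach_map_val]

lemma testBit_ack (xs : List HF) (k : ℕ) :
    (HF.ack (.mk xs)).testBit k = decide (k ∈ xs.map HF.ack) := by
  rw [ack_mk]
  have h1 : ((xs.map HF.ack).dedup.map fun i => 2 ^ i).sum
      = ∑ i ∈ (xs.map HF.ack).toFinset, 2 ^ i := by
    have h2 : (xs.map HF.ack).dedup.toFinset = (xs.map HF.ack).toFinset := by
      ext i; simp
    rw [← h2, List.sum_toFinset _ (List.nodup_dedup _)]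
  rw [h1, testBit_sum_two_pow]
  simp

lemma equiv_iff (xs ys : List HF) : HF.Equiv (.mk xs) (.mk ys) ↔
    ((∀ a ∈ xs, ∃ b ∈ ys, HF.Equiv a b) ∧ (∀ b ∈ ys, ∃ a ∈ xs, HF.Equiv a b)) := by
  rw [HF.Equiv]
  constructor
  · rintro ⟨h1, h2⟩
    exact ⟨h1, fun b hb => by obtain ⟨a, _, h⟩ := h2 b hb; exact ⟨a.1, a.2, h⟩⟩
  · rintro ⟨h1, h2⟩
    refine ⟨h1, fun b hb => ?_⟩
    obtain ⟨a, ha, h⟩ := h2 b hb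
    exact ⟨⟨a, ha⟩, List.mem_attach _ _, h⟩

lemma equiv_refl : ∀ x : HF, HF.Equiv x x
  | .mk xs => by
    rw [equiv_iff]
    constructor <;> exact fun a ha => ⟨a, ha, equiv_refl a⟩
termination_by x => sizeOf x
decreasing_by
  all_goals (have := List.sizeOf_lt_of_mem ha; simp only [HF.mk.sizeOf_spec]; omega)

lemma ack_equiv : ∀ x y : HF, HF.Equiv x y → HF.ack x = HF.ack y
  | .mk xs, .mk ys, h => by
    rw [equiv_iff] at h
    apply Nat.eq_of_testBit_eq
    intro k
    rw [testBit_ack, testBit_ack]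
    simp only [List.mem_map, decide_eq_decide]
    constructor
    · rintro ⟨a, ha, rfl⟩
      obtain ⟨b, hb, hab⟩ := h.1 a ha
      exact ⟨b, hb, (ack_equiv a b hab).symm⟩
    · rintro ⟨b, hb, rfl⟩
      obtain ⟨a, ha, hab⟩ := h.2 b hb
      exact ⟨a, ha, ack_equiv a b hab⟩
termination_by x => sizeOf x
decreasing_by
  · have := List.sizeOf_lt_of_mem ha; simp only [HF.mk.sizeOf_spec]; omega
  · have := List.sizeOf_lt_of_mem ha; simp only [HF.mk.sizeOf_spec]; omega

lemma mem_testBit (a x : HF) (h : HF.Mem a x) : (HF.ack x).testBit (HF.ack a) = true := by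
  obtain ⟨xs⟩ := x
  obtain ⟨b, hb, hab⟩ := h
  rw [testBit_ack]
  simp only [List.mem_map, decide_eq_true_eq]
  exact ⟨b, hb, (ack_equiv a b hab).symm⟩

lemma subset_and (y x : HF) (h : HF.Subset y x) : HF.ack y &&& HF.ack x = HF.ack y := by
  apply Nat.eq_of_testBit_eq
  intro k
  rw [Nat.testBit_and]
  obtain ⟨ys⟩ := y
  by_cases hk : (HF.ack (.mk ys)).testBit k
  · rw [hk, Bool.true_and]
    rw [testBit_ack] at hk
    simp only [List.mem_map, decide_eq_true_eq] at hk
    obtain ⟨a, ha, rfl⟩ := hk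
    exact mem_testBit a x (h a ⟨a, ha, equiv_refl a⟩)
  · simp [Bool.eq_false_iff.mpr hk]

lemma sublist_subset (l : List HF) (xs : List HF) (h : l.Sublist xs) :
    HF.Subset (.mk l) (.mk xs) := by
  rintro a ⟨b, hb, hab⟩
  exact ⟨b, h.subset hb, hab⟩

lemma ack_filter (xs : List HF) (k : ℕ) (h : k &&& HF.ack (.mk xs) = k) :
    HF.ack (.mk (xs.filter fun a => k.testBit (HF.ack a))) = k := by
  apply Nat.eq_of_testBit_eq
  intro j
  rw [testBit_ack]
  by_cases hj : k.testBit j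
  · have h2 : (k &&& HF.ack (.mk xs)).testBit j = k.testBit j := by rw [h]
    rw [Nat.testBit_and, hj, Bool.true_and] at h2
    rw [testBit_ack] at h2
    simp only [List.mem_map, decide_eq_true_eq] at h2
    obtain ⟨a, ha, rfl⟩ := h2
    rw [hj, decide_eq_true_eq]
    exact List.mem_map.mpr ⟨a, List.mem_filter.mpr ⟨ha, hj⟩, rfl⟩
  · rw [Bool.eq_false_iff.mpr hj, decide_eq_false]
    intro hmem
    obtain ⟨a, ha, rfl⟩ := List.mem_map.mp hmem
    exact hj (List.mem_filter.mp ha).2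

lemma exists_subset_iff (xs : List HF) (k : ℕ) :
    (∃ y : HF, HF.Subset y (.mk xs) ∧ HF.ack y = k) ↔ k &&& HF.ack (.mk xs) = k := by
  constructor
  · rintro ⟨y, hy, rfl⟩
    exact subset_and y _ hy
  · intro h
    exact ⟨.mk (xs.filter fun a => k.testBit (HF.ack a)),
      sublist_subset _ _ List.filter_sublist, ack_filter xs k h⟩

lemma testBit_ack_powerset (x : HF) (k : ℕ) :
    (HF.ack (HF.powerset x)).testBit k = decide (k &&& HF.ack x = k) := by
  obtain ⟨xs⟩ := x
  rw [HF.powerset]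
  show (HF.ack (.mk ((HF.elems (.mk xs)).sublists.map HF.mk))).testBit k = _
  rw [testBit_ack, decide_eq_decide]
  simp only [HF.elems, List.map_map, List.mem_map, Function.comp, List.mem_sublists,
    decide_eq_decide]
  constructor
  · rintro ⟨l, hl, rfl⟩
    exact subset_and (.mk l) (.mk xs) (sublist_subset l xs hl)
  · intro h
    exact ⟨xs.filter fun a => k.testBit (HF.ack a), List.filter_sublist, ack_filter xs k h⟩

end HFAux

open Classical in
/-- The code of the powerset of `x` is the sum of `2 ^ (ack y)` over all
(codes of) subsets `y ⊆ x`, and it equals `P (ack x)`. -/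
theorem ack_powerset (x : HF) :
    HF.ack (HF.powerset x) =
      ∑ k ∈ (Finset.range (HF.ack x + 1)).filter
          (fun k => ∃ y : HF, HF.Subset y x ∧ HF.ack y = k), 2 ^ k ∧
    HF.ack (HF.powerset x) = P (HF.ack x) := by
  constructor
  · apply Nat.eq_of_testBit_eq
    intro k
    rw [HFAux.testBit_ack_powerset, HFAux.testBit_sum_two_pow, decide_eq_decide,
      Finset.mem_filter, Finset.mem_range]
    obtain ⟨xs⟩ := x
    rw [HFAux.exists_subset_iff]
    constructor
    · intro h
      have : k ≤ HF.ack (.mk xs) := h ▸ Nat.and_le_right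
      exact ⟨by omega, h⟩
    · exact fun h => h.2
  · apply Nat.eq_of_testBit_eq
    intro k
    rw [HFAux.testBit_ack_powerset, HFAux.testBit_P]
end
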